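/- For every integer t with s + 1 ≤ t ≤ T, one has f_{(s,0)}(t) = (T − s) c + (q_{t−s} − c)·E[min(L, t − s)], where L has the discrete Weibull distribution W(θ,β). -/

import Mathlib

open MeasureTheory ProbabilityTheory Real

private lemma abel_aux (θ β : ℝ) (N : ℕ) :
    (∑ k ∈ Finset.Icc 1 N,
        (Real.exp (-θ * ((k : ℝ) - 1) ^ β) - Real.exp (-θ * (k : ℝ) ^ β)) * (k : ℝ))
      + Real.exp (-θ * (N : ℝ) ^ β) * (N : ℝ)
    = ∑ j ∈ Finset.range N, Real.exp (-θ * (j : ℝ) ^ β) := by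
  induction N with
  | zero => simp
  | succ N ih =>
    rw [Finset.sum_Icc_succ_top (by omega), Finset.sum_range_succ]
    push_cast
    rw [show (N : ℝ) + 1 - 1 = (N : ℝ) by ring]
    linear_combination ih

/-- For every integer `t` with `s + 1 ≤ t ≤ T`,
`f_{(s,0)}(t) = (T − s) c + (q_{t−s} − c)·E[min(L, t − s)]`,
where `L` has the discrete Weibull distribution `W(θ,β)` and `c = inf_{t ≥ 1} q_t`. -/
theorem objective_age_zero_decomposition
    {Ω : Type*} [MeasureSpace Ω] [IsProbabilityMeasure (ℙ : Measure Ω)]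
    (θ β g h m : ℝ) (hθ : 0 < θ) (hβ : 1 < β) (hg : 0 ≤ g) (hh : 0 ≤ h) (hm : 0 ≤ m)
    (L : Ω → ℕ) (hmeasL : Measurable L) (hposL : ∀ ω, 1 ≤ L ω)
    (hsurvL : ∀ u : ℕ, ℙ {ω | u < L ω} = ENNReal.ofReal (Real.exp (-θ * (u : ℝ) ^ β)))
    (q : ℕ → ℝ)
    (hq : ∀ t : ℕ, 1 ≤ t →
      q t = ((1 - Real.exp (-θ * (t : ℝ) ^ β)) * g
            + Real.exp (-θ * (t : ℝ) ^ β) * (h + m * t))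
          / ((∑ k ∈ Finset.Icc 1 t,
              (Real.exp (-θ * ((k : ℝ) - 1) ^ β) - Real.exp (-θ * (k : ℝ) ^ β)) * (k : ℝ))
            + Real.exp (-θ * (t : ℝ) ^ β) * (t : ℝ)))
    (c : ℝ) (hc : c = ⨅ t : ℕ, q (t + 1))
    (T s : ℕ) (hT : 1 ≤ T) (hsT : s < T)
    (Q : ℕ → ℝ → ℝ)
    (hQ : ∀ t : ℕ, s + 1 ≤ t → t ≤ T → ∀ u : ℝ,
      Q t u = if u ≤ (t : ℝ) then g + ((T : ℝ) - u) * c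
              else h + ((t : ℝ) - (s : ℝ)) * m + ((T : ℝ) - (t : ℝ)) * c)
    (f : ℕ → ℝ)
    (hf : ∀ t : ℕ, f t = ∫ ω, Q t ((s : ℝ) + (L ω : ℝ)) ∂ℙ) :
    ∀ t : ℕ, s + 1 ≤ t → t ≤ T →
      f t = ((T : ℝ) - (s : ℝ)) * c
        + (q (t - s) - c) * ∫ ω, (min (L ω) (t - s) : ℝ) ∂ℙ := by
  intro t hst htT
  set n := t - s with hn
  have hn1 : 1 ≤ n := by omega
  have htn : t = s + n := by omega
  -- measurability of level sets
  have hS : ∀ j : ℕ, MeasurableSet {ω | j < L ω} := fun j => hmeasL (by trivial)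
  have hindInt : ∀ j : ℕ,
      Integrable ({ω | j < L ω}.indicator (fun _ => (1 : ℝ))) ℙ :=
    fun j => (integrable_const (1 : ℝ)).indicator (hS j)
  have hind : ∀ j : ℕ,
      ∫ ω, ({ω | j < L ω}.indicator (fun _ => (1 : ℝ)) ω) ∂ℙ
        = Real.exp (-θ * (j : ℝ) ^ β) := by
    intro j
    rw [integral_indicator_const (1 : ℝ) (hS j), measureReal_def, hsurvL j, smul_eq_mul, mul_one,
      ENNReal.toReal_ofReal (Real.exp_nonneg _)]
  -- min as a sum of indicators
  have hminrep : ∀ ω, ((min (L ω) n : ℕ) : ℝ)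
      = ∑ j ∈ Finset.range n, {ω | j < L ω}.indicator (fun _ => (1 : ℝ)) ω := by
    intro ω
    have : ∀ j, {ω | j < L ω}.indicator (fun _ => (1 : ℝ)) ω
        = if j < L ω then (1 : ℝ) else 0 := by
      intro j
      simp [Set.indicator_apply]
    simp_rw [this]
    rw [Finset.sum_boole]
    have hfil : (Finset.range n).filter (fun j => j < L ω) = Finset.range (min (L ω) n) := by
      ext j
      simp only [Finset.mem_filter, Finset.mem_range, Nat.lt_min]
      omega
    rw [hfil, Finset.card_range]
  have hminInt : Integrable (fun ω => ((min (L ω) n : ℕ) : ℝ)) ℙ := by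
    have : (fun ω => ((min (L ω) n : ℕ) : ℝ))
        = fun ω => ∑ j ∈ Finset.range n, {ω | j < L ω}.indicator (fun _ => (1 : ℝ)) ω :=
      funext hminrep
    rw [this]
    exact integrable_finset_sum _ (fun j _ => hindInt j)
  have hminVal : ∫ ω, ((min (L ω) n : ℕ) : ℝ) ∂ℙ
      = ∑ j ∈ Finset.range n, Real.exp (-θ * (j : ℝ) ^ β) := by
    simp_rw [hminrep]
    rw [integral_finset_sum _ (fun j _ => hindInt j)]
    exact Finset.sum_congr rfl (fun j _ => hind j)
  -- pointwise decomposition of the integrand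
  have hpt : ∀ ω, Q t ((s : ℝ) + (L ω : ℝ))
      = (((T : ℝ) - (s : ℝ)) * c + g) + (-c) * ((min (L ω) n : ℕ) : ℝ)
        + (h + (n : ℝ) * m - g) * {ω | n < L ω}.indicator (fun _ => (1 : ℝ)) ω := by
    intro ω
    rw [hQ t hst htT]
    by_cases hk : L ω ≤ n
    · have h1 : (s : ℝ) + (L ω : ℝ) ≤ (t : ℝ) := by
        have : s + L ω ≤ t := by omega
        exact_mod_cast this
      rw [if_pos h1, min_eq_left hk,
        Set.indicator_of_notMem (by simpa using hk)]
      ring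
    · push_neg at hk
      have h1 : ¬ ((s : ℝ) + (L ω : ℝ) ≤ (t : ℝ)) := by
        push_neg
        have : t < s + L ω := by omega
        exact_mod_cast this
      rw [if_neg h1, min_eq_right hk.le,
        Set.indicator_of_mem (show ω ∈ {ω | n < L ω} from hk)]
      rw [htn]
      push_cast
      ring
  -- compute f t
  have hft : f t = (((T : ℝ) - (s : ℝ)) * c + g)
      + (-c) * (∫ ω, ((min (L ω) n : ℕ) : ℝ) ∂ℙ)
      + (h + (n : ℝ) * m - g) * Real.exp (-θ * (n : ℝ) ^ β) := by
    rw [hf t]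
    simp_rw [hpt]
    have hInt1 : Integrable (fun ω => (((T : ℝ) - (s : ℝ)) * c + g)
        + (-c) * ((min (L ω) n : ℕ) : ℝ)) ℙ :=
      (integrable_const _).add (hminInt.const_mul (-c))
    have hInt2 : Integrable (fun ω =>
        (h + (n : ℝ) * m - g) * {ω | n < L ω}.indicator (fun _ => (1 : ℝ)) ω) ℙ :=
      (hindInt n).const_mul _
    rw [integral_add hInt1 hInt2,
      integral_add (integrable_const _) (hminInt.const_mul (-c)),
      integral_const, integral_const_mul, integral_const_mul, hind n]
    simp
  -- the denominator of q n
  have hD : (0 : ℝ) < ∑ j ∈ Finset.range n, Real.exp (-θ * (j : ℝ) ^ β) :=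
    Finset.sum_pos (fun j _ => Real.exp_pos _) (Finset.nonempty_range_iff.mpr (by omega))
  have hqD : q n * (∑ j ∈ Finset.range n, Real.exp (-θ * (j : ℝ) ^ β))
      = (1 - Real.exp (-θ * (n : ℝ) ^ β)) * g
        + Real.exp (-θ * (n : ℝ) ^ β) * (h + m * n) := by
    rw [hq n hn1, abel_aux θ β n, div_mul_cancel₀ _ hD.ne']
  have hcast : (fun ω => min ((L ω : ℝ)) ((t : ℝ) - (s : ℝ)))
      = fun ω => ((min (L ω) n : ℕ) : ℝ) := by
    funext ω
    have hts : (t : ℝ) - (s : ℝ) = (n : ℝ) := by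
      rw [htn]; push_cast; ring
    rw [hts]
    exact (Nat.cast_min _ _).symm
  rw [hft]
  rw [show (∫ ω, min ((L ω : ℝ)) ((t : ℝ) - (s : ℝ)) ∂ℙ)
      = ∫ ω, ((min (L ω) n : ℕ) : ℝ) ∂ℙ from by rw [hcast]]
  rw [hminVal]
  linear_combination -hqD
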